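/- Let H be a Hopf algebra over a field k and F an invertible element of H⊗H satisfying the 2-cocycle condition (F⊗1)·(Δ⊗id)(F) = (1⊗F)·(id⊗Δ)(F) and the counital condition (ε⊗id)(F) = 1 = (id⊗ε)(F). Then H with the same algebra structure, coproduct Δ_F(h) = F·Δ(h)·F⁻¹, the same counit, and antipode S_F(h) = U·S(h)·U⁻¹ where U = F₁·S(F₂) (with F = F₁⊗F₂, summation understood), is again a Hopf algebra. -/

import Mathlib

open TensorProduct LinearMap

noncomputable section

variable (k : Type) [Field k]
variable (H : Type) [Ring H] [HopfAlgebra k H]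

/-- `F`, with inverse `Finv`, is a counital 2-cocycle on the Hopf algebra `H`:
`(F⊗1)·(Δ⊗id)(F) = (1⊗F)·(id⊗Δ)(F)` and `(ε⊗id)(F) = 1 = (id⊗ε)(F)`. -/
def IsCocycle (F Finv : H ⊗[k] H) : Prop :=
  F * Finv = 1 ∧ Finv * F = 1 ∧
  (F ⊗ₜ[k] (1 : H)) * (TensorProduct.map Coalgebra.comul LinearMap.id F) =
    (TensorProduct.assoc k H H H).symm
      (((1 : H) ⊗ₜ[k] F) * (TensorProduct.map LinearMap.id Coalgebra.comul F)) ∧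
  TensorProduct.map Coalgebra.counit LinearMap.id F = 1 ∧
  TensorProduct.map LinearMap.id Coalgebra.counit F = 1

/-- A (left) module-algebra structure of a Hopf algebra `H` on an algebra `A`:
`A` is an algebra object in the category of `H`-modules. -/
structure ModuleAlgebra (A : Type) [Ring A] [Algebra k A] where
  act : H →ₗ[k] Module.End k A
  act_one : act 1 = 1
  act_mul : ∀ g h : H, act (g * h) = act g * act h
  act_algebra_unit : ∀ h : H, act h (1 : A) = (Coalgebra.counit h : k) • (1 : A)
  act_algebra_mul : ∀ (h : H) (a b : A),
    act h (a * b) = LinearMap.mul' k A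
      ((TensorProduct.homTensorHomMap (RingHom.id k) A A A A
        (TensorProduct.map act act (Coalgebra.comul h))) (a ⊗ₜ[k] b))

variable {k H}

/-- The operator on `A ⊗ B` obtained by letting an element `x ∈ H ⊗ H` act
legwise through the actions `actA`, `actB`. -/
def legAct {A B : Type} [AddCommGroup A] [Module k A] [AddCommGroup B] [Module k B]
    (actA : H →ₗ[k] Module.End k A) (actB : H →ₗ[k] Module.End k B) (x : H ⊗[k] H) :
    A ⊗[k] B →ₗ[k] A ⊗[k] B :=
  TensorProduct.homTensorHomMap (RingHom.id k) A B A B (TensorProduct.map actA actB x)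

/-- The twisted product `m_F = m ∘ (F⁻¹ ▷ −)` on `A`. -/
def twistedMul {A : Type} [Ring A] [Algebra k A] (ma : ModuleAlgebra k H A)
    (Finv : H ⊗[k] H) : A ⊗[k] A →ₗ[k] A :=
  LinearMap.mul' k A ∘ₗ legAct ma.act ma.act Finv

/-- The twisted coproduct `Δ_F(h) = F·Δ(h)·F⁻¹`. -/
def twistedComul (F Finv : H ⊗[k] H) : H →ₗ[k] H ⊗[k] H :=
  LinearMap.mulLeft k F ∘ₗ LinearMap.mulRight k Finv ∘ₗ Coalgebra.comul


/-- The element `U = F₁·S(F₂)` (summation understood). -/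
def twistU (F : H ⊗[k] H) : H :=
  LinearMap.mul' k H ((HopfAlgebra.antipode (R := k)).lTensor H F)

/-- The twisted antipode `S_F(h) = U·S(h)·Uinv`. -/
def twistedAntipode (F : H ⊗[k] H) (Uinv : H) : H →ₗ[k] H :=
  LinearMap.mulLeft k (twistU F) ∘ₗ LinearMap.mulRight k Uinv ∘ₗ HopfAlgebra.antipode (R := k)

section DrinfeldTwistAux
set_option linter.unusedSectionVars false
set_option linter.unusedVariables false
namespace DrinfeldTwist

local notation "S°" => HopfAlgebra.antipode (R := k)
local notation "μ°" => LinearMap.mul' k H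
local notation "Δ°" => (Coalgebra.comul : H →ₗ[k] H ⊗[k] H)
local notation "ε°" => (Coalgebra.counit : H →ₗ[k] k)

lemma antipode_one : (S° : H →ₗ[k] H) 1 = 1 := by
  have := HopfAlgebra.mul_antipode_rTensor_comul_apply (R := k) (1 : H)
  simpa [Algebra.TensorProduct.one_def] using this

/-- RR w (a ⊗ b) = (S a * w) * b -/
def RR (w : H) : H ⊗[k] H →ₗ[k] H :=
  LinearMap.mul' k H ∘ₗ TensorProduct.map (LinearMap.mulRight k w ∘ₗ S°) LinearMap.id

/-- RR' w (a ⊗ b) = a * (w * S b) -/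
def RR' (w : H) : H ⊗[k] H →ₗ[k] H :=
  LinearMap.mul' k H ∘ₗ TensorProduct.map LinearMap.id (LinearMap.mulLeft k w ∘ₗ S°)

@[simp] lemma RR_tmul (w a b : H) : RR w (a ⊗ₜ[k] b) = S° a * w * b := by
  simp [RR]

@[simp] lemma RR'_tmul (w a b : H) : RR' w (a ⊗ₜ[k] b) = a * (w * S° b) := by
  simp [RR']

lemma RR_add_w (w w' : H) (x : H ⊗[k] H) : RR (w + w') x = RR w x + RR w' x := by
  induction x using TensorProduct.induction_on with
  | zero => simp
  | tmul a b => simp [mul_add, add_mul]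
  | add u v hu hv => simp [map_add, hu, hv]; abel

lemma RR'_add_w (w w' : H) (x : H ⊗[k] H) : RR' (w + w') x = RR' w x + RR' w' x := by
  induction x using TensorProduct.induction_on with
  | zero => simp
  | tmul a b => simp [mul_add, add_mul]
  | add u v hu hv => simp [map_add, hu, hv]; abel

lemma RR_zero_w (x : H ⊗[k] H) : RR (0 : H) x = 0 := by
  induction x using TensorProduct.induction_on with
  | zero => simp
  | tmul a b => simp
  | add u v hu hv => simp [map_add, hu, hv]

lemma RR'_zero_w (x : H ⊗[k] H) : RR' (0 : H) x = 0 := by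
  induction x using TensorProduct.induction_on with
  | zero => simp
  | tmul a b => simp
  | add u v hu hv => simp [map_add, hu, hv]

lemma RR_smul_w (r : k) (w : H) (x : H ⊗[k] H) : RR (r • w) x = r • RR w x := by
  induction x using TensorProduct.induction_on with
  | zero => simp
  | tmul a b => simp [mul_smul_comm, smul_mul_assoc]
  | add u v hu hv => simp [map_add, hu, hv]

lemma RR'_smul_w (r : k) (w : H) (x : H ⊗[k] H) : RR' (r • w) x = r • RR' w x := by
  induction x using TensorProduct.induction_on with
  | zero => simp
  | tmul a b => simp [mul_smul_comm, smul_mul_assoc]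
  | add u v hu hv => simp [map_add, hu, hv]

lemma RR_one_comul (h : H) : RR 1 (Δ° h) = algebraMap k H (ε° h) := by
  have : RR (1 : H) = μ° ∘ₗ (S° : H →ₗ[k] H).rTensor H := by
    unfold RR
    congr 1
    rw [LinearMap.mulRight_one, LinearMap.id_comp]
    rfl
  rw [this]
  exact HopfAlgebra.mul_antipode_rTensor_comul_apply h

lemma RR'_one_comul (h : H) : RR' 1 (Δ° h) = algebraMap k H (ε° h) := by
  have : RR' (1 : H) = μ° ∘ₗ (S° : H →ₗ[k] H).lTensor H := by
    unfold RR'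
    congr 1
    rw [LinearMap.mulLeft_one, LinearMap.id_comp]
    rfl
  rw [this]
  exact HopfAlgebra.mul_antipode_lTensor_comul_apply h


/-- Convolution product on linear maps `H ⊗ H → H`, w.r.t. the tensor-product
coalgebra structure on `H ⊗ H`. -/
def conv (f g : H ⊗[k] H →ₗ[k] H) : H ⊗[k] H →ₗ[k] H :=
  LinearMap.mul' k H ∘ₗ TensorProduct.map f g ∘ₗ
    (Coalgebra.comul : H ⊗[k] H →ₗ[k] (H ⊗[k] H) ⊗[k] (H ⊗[k] H))

/-- unit of the convolution algebra -/
def convUnit : H ⊗[k] H →ₗ[k] H :=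
  Algebra.linearMap k H ∘ₗ (Coalgebra.counit : H ⊗[k] H →ₗ[k] k)

lemma mul_assoc_aux (v : H ⊗[k] (H ⊗[k] H)) :
    LinearMap.mul' k H (TensorProduct.map (LinearMap.mul' k H) LinearMap.id
      ((TensorProduct.assoc k H H H).symm v)) =
    LinearMap.mul' k H (TensorProduct.map LinearMap.id (LinearMap.mul' k H) v) := by
  induction v using TensorProduct.induction_on with
  | zero => rw [LinearEquiv.map_zero]; simp
  | tmul a u =>
    induction u using TensorProduct.induction_on with
    | zero => rw [tmul_zero, LinearEquiv.map_zero]; simp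
    | tmul b c => simp [mul_assoc]
    | add u₁ u₂ h1 h2 => rw [tmul_add, LinearEquiv.map_add, map_add, map_add, map_add, map_add, h1, h2]
  | add v₁ v₂ h1 h2 => rw [LinearEquiv.map_add, map_add, map_add, map_add, map_add, h1, h2]

lemma conv_assoc (f g h : H ⊗[k] H →ₗ[k] H) :
    conv (conv f g) h = conv f (conv g h) := by
  refine LinearMap.ext fun x => ?_
  have lhs1 : conv (conv f g) h x
      = LinearMap.mul' k H (TensorProduct.map (LinearMap.mul' k H) LinearMap.id
          (TensorProduct.map (TensorProduct.map f g) h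
            ((Coalgebra.comul (R := k)).rTensor (H ⊗[k] H) (Coalgebra.comul x)))) := by
    simp only [conv, LinearMap.comp_apply]
    congr 1
    have e : TensorProduct.map (LinearMap.mul' k H ∘ₗ TensorProduct.map f g ∘ₗ Coalgebra.comul) h
        = TensorProduct.map (LinearMap.mul' k H) LinearMap.id
            ∘ₗ TensorProduct.map (TensorProduct.map f g) h
            ∘ₗ TensorProduct.map Coalgebra.comul LinearMap.id := by
      rw [← TensorProduct.map_comp, ← TensorProduct.map_comp]
      simp
    rw [e]; rfl
  have rhs1 : conv f (conv g h) x
      = LinearMap.mul' k H (TensorProduct.map LinearMap.id (LinearMap.mul' k H)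
          (TensorProduct.map f (TensorProduct.map g h)
            ((Coalgebra.comul (R := k)).lTensor (H ⊗[k] H) (Coalgebra.comul x)))) := by
    simp only [conv, LinearMap.comp_apply]
    congr 1
    have e : TensorProduct.map f (LinearMap.mul' k H ∘ₗ TensorProduct.map g h ∘ₗ Coalgebra.comul)
        = TensorProduct.map LinearMap.id (LinearMap.mul' k H)
            ∘ₗ TensorProduct.map f (TensorProduct.map g h)
            ∘ₗ TensorProduct.map LinearMap.id Coalgebra.comul := by
      rw [← TensorProduct.map_comp, ← TensorProduct.map_comp]
      simp
    rw [e]; rfl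
  rw [lhs1, rhs1, ← Coalgebra.coassoc_symm_apply (R := k) x,
    TensorProduct.map_map_assoc_symm]
  exact mul_assoc_aux _

lemma conv_unit_left (f : H ⊗[k] H →ₗ[k] H) : conv convUnit f = f := by
  refine LinearMap.ext fun x => ?_
  have e : TensorProduct.map (convUnit : H ⊗[k] H →ₗ[k] H) f
      = TensorProduct.map (Algebra.linearMap k H) f ∘ₗ (Coalgebra.counit (R := k)).rTensor _ := by
    apply TensorProduct.ext'
    intro a b
    simp [convUnit]
  simp only [conv, LinearMap.comp_apply, e]
  rw [Coalgebra.rTensor_counit_comul]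
  simp

lemma conv_unit_right (f : H ⊗[k] H →ₗ[k] H) : conv f convUnit = f := by
  refine LinearMap.ext fun x => ?_
  have e : TensorProduct.map f (convUnit : H ⊗[k] H →ₗ[k] H)
      = TensorProduct.map f (Algebra.linearMap k H) ∘ₗ (Coalgebra.counit (R := k)).lTensor _ := by
    apply TensorProduct.ext'
    intro a b
    simp [convUnit]
  simp only [conv, LinearMap.comp_apply, e]
  rw [Coalgebra.lTensor_counit_comul]
  simp

lemma muljoin (y z : H ⊗[k] H) :
    TensorProduct.map (LinearMap.mul' k H) (LinearMap.mul' k H)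
      (TensorProduct.tensorTensorTensorComm k H H H H (y ⊗ₜ[k] z)) = y * z := by
  induction y using TensorProduct.induction_on with
  | zero => simp [zero_mul]
  | tmul a b =>
    induction z using TensorProduct.induction_on with
    | zero => simp [mul_zero]
    | tmul c d => simp [Algebra.TensorProduct.tmul_mul_tmul]
    | add u v hu hv => rw [tmul_add, LinearEquiv.map_add, map_add, hu, hv, mul_add]
  | add u v hu hv => rw [add_tmul, LinearEquiv.map_add, map_add, hu, hv, add_mul]

lemma comul_mul'_comm (x : H ⊗[k] H) :
    TensorProduct.map (LinearMap.mul' k H) (LinearMap.mul' k H) (Coalgebra.comul (R := k) x)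
      = Coalgebra.comul (LinearMap.mul' k H x) := by
  have : Coalgebra.comul (R := k) (A := H ⊗[k] H)
      = (TensorProduct.tensorTensorTensorComm k H H H H).toLinearMap ∘ₗ
          TensorProduct.map Coalgebra.comul Coalgebra.comul := rfl
  induction x using TensorProduct.induction_on with
  | zero => simp
  | tmul a b =>
    rw [this]
    simp only [LinearMap.comp_apply, TensorProduct.map_tmul, LinearEquiv.coe_coe,
      LinearMap.mul'_apply, Bialgebra.comul_mul]
    exact muljoin _ _
  | add u v hu hv => rw [map_add, map_add, map_add, hu, hv, map_add]

lemma counit_mul'_comm (x : H ⊗[k] H) :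
    Coalgebra.counit (R := k) x = Coalgebra.counit (LinearMap.mul' k H x) := by
  induction x using TensorProduct.induction_on with
  | zero => simp
  | tmul a b =>
    rw [show Coalgebra.counit (R := k) (A := H ⊗[k] H)
      = LinearMap.mul' k k ∘ₗ TensorProduct.map Coalgebra.counit Coalgebra.counit from
        TensorProduct.ext' fun a b => by simp [TensorProduct.counit_tmul, mul_comm]]
    simp
  | add u v hu hv => rw [map_add, map_add, hu, hv, map_add]

lemma convB : conv ((HopfAlgebra.antipode (R := k)) ∘ₗ LinearMap.mul' k H) (LinearMap.mul' k H)
    = (convUnit : H ⊗[k] H →ₗ[k] H) := by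
  refine LinearMap.ext fun x => ?_
  have e : TensorProduct.map ((HopfAlgebra.antipode (R := k) : H →ₗ[k] H) ∘ₗ LinearMap.mul' k H)
        (LinearMap.mul' k H)
      = (HopfAlgebra.antipode (R := k) : H →ₗ[k] H).rTensor H ∘ₗ
          TensorProduct.map (LinearMap.mul' k H) (LinearMap.mul' k H) := by
    apply TensorProduct.ext'
    intro a b
    simp
  simp only [conv, LinearMap.comp_apply, e, comul_mul'_comm]
  rw [HopfAlgebra.mul_antipode_rTensor_comul_apply]
  simp only [convUnit, LinearMap.comp_apply, Algebra.linearMap_apply]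
  rw [counit_mul'_comm]

/-- the "opposite antipode" candidate -/
def nu : H ⊗[k] H →ₗ[k] H :=
  LinearMap.mul' k H ∘ₗ TensorProduct.map (HopfAlgebra.antipode (R := k)) (HopfAlgebra.antipode (R := k))
    ∘ₗ (TensorProduct.comm k H H).toLinearMap

@[simp] lemma nu_tmul (a b : H) : (nu : H ⊗[k] H →ₗ[k] H) (a ⊗ₜ[k] b) = S° b * S° a := by
  simp [nu]

lemma convA_aux (y z : H ⊗[k] H) :
    LinearMap.mul' k H (TensorProduct.map (LinearMap.mul' k H) nu
      (TensorProduct.tensorTensorTensorComm k H H H H (y ⊗ₜ[k] z))) = RR' (RR' 1 z) y := by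
  induction y using TensorProduct.induction_on with
  | zero => simp [RR']
  | tmul a b =>
    induction z using TensorProduct.induction_on with
    | zero => rw [tmul_zero, LinearEquiv.map_zero, map_zero, map_zero, map_zero, RR'_zero_w]
    | tmul c d => simp [mul_assoc]
    | add u v hu hv =>
      rw [tmul_add, LinearEquiv.map_add, map_add, map_add, map_add, hu, hv, RR'_add_w]
  | add u v hu hv =>
    rw [add_tmul, LinearEquiv.map_add, map_add, map_add, map_add, hu, hv]

lemma convA : conv (LinearMap.mul' k H) nu = (convUnit : H ⊗[k] H →ₗ[k] H) := by
  apply TensorProduct.ext'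
  intro a b
  have hc : Coalgebra.comul (R := k) (a ⊗ₜ[k] b)
      = TensorProduct.tensorTensorTensorComm k H H H H
          ((Coalgebra.comul (R := k) a) ⊗ₜ[k] (Coalgebra.comul (R := k) b)) := rfl
  simp only [conv, LinearMap.comp_apply, hc, convA_aux]
  rw [RR'_one_comul, Algebra.algebraMap_eq_smul_one, RR'_smul_w, RR'_one_comul]
  simp only [convUnit, LinearMap.comp_apply, Algebra.linearMap_apply]
  rw [show Coalgebra.counit (R := k) (A := H ⊗[k] H) (a ⊗ₜ b)
      = Coalgebra.counit (R := k) a * Coalgebra.counit (R := k) b from by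
    rw [show Coalgebra.counit (R := k) (A := H ⊗[k] H)
      = LinearMap.mul' k k ∘ₗ TensorProduct.map Coalgebra.counit Coalgebra.counit from
        TensorProduct.ext' fun a b => by simp [TensorProduct.counit_tmul, mul_comm]]; simp]
  rw [Algebra.algebraMap_eq_smul_one, Algebra.algebraMap_eq_smul_one]
  rw [smul_smul, mul_comm]

lemma antipode_mul (a b : H) :
    (HopfAlgebra.antipode (R := k)) (a * b) = S° b * S° a := by
  have key : (HopfAlgebra.antipode (R := k) : H →ₗ[k] H) ∘ₗ LinearMap.mul' k H = nu := by
    calc (HopfAlgebra.antipode (R := k) : H →ₗ[k] H) ∘ₗ LinearMap.mul' k H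
        = conv ((HopfAlgebra.antipode (R := k) : H →ₗ[k] H) ∘ₗ LinearMap.mul' k H) convUnit :=
          (conv_unit_right _).symm
      _ = conv ((HopfAlgebra.antipode (R := k) : H →ₗ[k] H) ∘ₗ LinearMap.mul' k H)
            (conv (LinearMap.mul' k H) nu) := by rw [convA]
      _ = conv (conv ((HopfAlgebra.antipode (R := k) : H →ₗ[k] H) ∘ₗ LinearMap.mul' k H)
            (LinearMap.mul' k H)) nu := (conv_assoc _ _ _).symm
      _ = conv convUnit nu := by rw [convB]
      _ = nu := conv_unit_left _
  have := DFunLike.congr_fun key (a ⊗ₜ[k] b)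
  simpa using this

/-! ### Generic multiplicativity lemmas -/

lemma map_mul_tmul {A B : Type} [Ring A] [Ring B] [Algebra k A] [Algebra k B]
    (f : H →ₗ[k] A) (g : H →ₗ[k] B)
    (hf : ∀ a b, f (a * b) = f a * f b) (hg : ∀ a b, g (a * b) = g a * g b)
    (x y : H ⊗[k] H) :
    TensorProduct.map f g (x * y) = TensorProduct.map f g x * TensorProduct.map f g y := by
  induction x using TensorProduct.induction_on with
  | zero => rw [zero_mul, map_zero, zero_mul]
  | tmul a b =>
    induction y using TensorProduct.induction_on with
    | zero => rw [mul_zero, map_zero, mul_zero]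
    | tmul c d => simp [Algebra.TensorProduct.tmul_mul_tmul, hf, hg]
    | add u v hu hv => rw [mul_add, map_add, hu, hv, map_add, mul_add]
  | add u v hu hv => rw [add_mul, map_add, hu, hv, map_add, add_mul]

lemma assocL_mul (x y : (H ⊗[k] H) ⊗[k] H) :
    TensorProduct.assoc k H H H (x * y) =
      TensorProduct.assoc k H H H x * TensorProduct.assoc k H H H y := by
  have h : ∀ z : (H ⊗[k] H) ⊗[k] H, TensorProduct.assoc k H H H z
      = Algebra.TensorProduct.assoc k k k H H H z := fun _ => rfl
  rw [h, h, h, map_mul]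

lemma assocL_one : TensorProduct.assoc k H H H (1 : (H ⊗[k] H) ⊗[k] H) = 1 := by
  have h : TensorProduct.assoc k H H H (1 : (H ⊗[k] H) ⊗[k] H)
      = Algebra.TensorProduct.assoc k k k H H H 1 := rfl
  rw [h, map_one]

lemma assocL_symm_mul (x y : H ⊗[k] (H ⊗[k] H)) :
    (TensorProduct.assoc k H H H).symm (x * y) =
      (TensorProduct.assoc k H H H).symm x * (TensorProduct.assoc k H H H).symm y := by
  apply (TensorProduct.assoc k H H H).injective
  rw [assocL_mul, LinearEquiv.apply_symm_apply, LinearEquiv.apply_symm_apply,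
    LinearEquiv.apply_symm_apply]

lemma assocL_symm_one :
    (TensorProduct.assoc k H H H).symm (1 : H ⊗[k] (H ⊗[k] H)) = 1 := by
  apply (TensorProduct.assoc k H H H).injective
  rw [LinearEquiv.apply_symm_apply, assocL_one]

/-! ### counit legs -/

def eps1 : H ⊗[k] H →ₗ[k] H :=
  (TensorProduct.lid k H).toLinearMap ∘ₗ TensorProduct.map Coalgebra.counit LinearMap.id

def eps2 : H ⊗[k] H →ₗ[k] H :=
  (TensorProduct.rid k H).toLinearMap ∘ₗ TensorProduct.map LinearMap.id Coalgebra.counit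

@[simp] lemma eps1_tmul (a b : H) : (eps1 : H ⊗[k] H →ₗ[k] H) (a ⊗ₜ[k] b) = ε° a • b := by
  simp [eps1]

@[simp] lemma eps2_tmul (a b : H) : (eps2 : H ⊗[k] H →ₗ[k] H) (a ⊗ₜ[k] b) = ε° b • a := by
  simp [eps2]

lemma eps1_mul (x y : H ⊗[k] H) : eps1 (x * y) = eps1 x * eps1 y := by
  induction x using TensorProduct.induction_on with
  | zero => rw [zero_mul, map_zero, zero_mul]
  | tmul a b =>
    induction y using TensorProduct.induction_on with
    | zero => rw [mul_zero, map_zero, mul_zero]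
    | tmul c d =>
      simp [Algebra.TensorProduct.tmul_mul_tmul, smul_mul_assoc, mul_smul_comm, smul_smul, mul_comm]
    | add u v hu hv => rw [mul_add, map_add, hu, hv, map_add, mul_add]
  | add u v hu hv => rw [add_mul, map_add, hu, hv, map_add, add_mul]

lemma eps2_mul (x y : H ⊗[k] H) : eps2 (x * y) = eps2 x * eps2 y := by
  induction x using TensorProduct.induction_on with
  | zero => rw [zero_mul, map_zero, zero_mul]
  | tmul a b =>
    induction y using TensorProduct.induction_on with
    | zero => rw [mul_zero, map_zero, mul_zero]
    | tmul c d =>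
      simp [Algebra.TensorProduct.tmul_mul_tmul, smul_mul_assoc, mul_smul_comm, smul_smul,
        mul_comm]
    | add u v hu hv => rw [mul_add, map_add, hu, hv, map_add, mul_add]
  | add u v hu hv => rw [add_mul, map_add, hu, hv, map_add, add_mul]

lemma eps1_one : (eps1 : H ⊗[k] H →ₗ[k] H) 1 = 1 := by
  rw [Algebra.TensorProduct.one_def]; simp

lemma eps2_one : (eps2 : H ⊗[k] H →ₗ[k] H) 1 = 1 := by
  rw [Algebra.TensorProduct.one_def]; simp

lemma eps1_comul (h : H) : eps1 (Δ° h) = h := by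
  have : (eps1 : H ⊗[k] H →ₗ[k] H) (Δ° h)
      = TensorProduct.lid k H ((Coalgebra.counit (R := k)).rTensor H (Δ° h)) := rfl
  rw [this, Coalgebra.rTensor_counit_comul]
  simp

lemma eps2_comul (h : H) : eps2 (Δ° h) = h := by
  have : (eps2 : H ⊗[k] H →ₗ[k] H) (Δ° h)
      = TensorProduct.rid k H ((Coalgebra.counit (R := k)).lTensor H (Δ° h)) := rfl
  rw [this, Coalgebra.lTensor_counit_comul]
  simp

/-! ### comul legs -/

def D1 : H ⊗[k] H →ₗ[k] (H ⊗[k] H) ⊗[k] H :=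
  TensorProduct.map Coalgebra.comul LinearMap.id

def D2 : H ⊗[k] H →ₗ[k] H ⊗[k] (H ⊗[k] H) :=
  TensorProduct.map LinearMap.id Coalgebra.comul

lemma D1_mul (x y : H ⊗[k] H) : D1 (x * y) = D1 x * D1 y :=
  map_mul_tmul _ _ (fun a b => Bialgebra.comul_mul a b) (fun _ _ => rfl) x y

lemma D2_mul (x y : H ⊗[k] H) : D2 (x * y) = D2 x * D2 y :=
  map_mul_tmul _ _ (fun _ _ => rfl) (fun a b => Bialgebra.comul_mul a b) x y

lemma D1_one : (D1 : H ⊗[k] H →ₗ[k] (H ⊗[k] H) ⊗[k] H) 1 = 1 := by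
  rw [Algebra.TensorProduct.one_def]
  show (Δ° (1:H)) ⊗ₜ[k] ((LinearMap.id : H →ₗ[k] H) 1) = 1
  rw [Bialgebra.comul_one]
  rfl

lemma D2_one : (D2 : H ⊗[k] H →ₗ[k] H ⊗[k] (H ⊗[k] H)) 1 = 1 := by
  rw [Algebra.TensorProduct.one_def]
  show ((LinearMap.id : H →ₗ[k] H) 1) ⊗ₜ[k] (Δ° (1:H)) = 1
  rw [Bialgebra.comul_one]
  rfl

/-! ### composition laws for RR, RR' -/

lemma RR_comp (w : H) (x y : H ⊗[k] H) : RR w (x * y) = RR (RR w x) y := by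
  induction x using TensorProduct.induction_on with
  | zero => simp [RR_zero_w]
  | tmul a b =>
    induction y using TensorProduct.induction_on with
    | zero => simp
    | tmul c d => simp [Algebra.TensorProduct.tmul_mul_tmul, antipode_mul, mul_assoc]
    | add u v hu hv => simp [mul_add, hu, hv]
  | add u v hu hv => simp [add_mul, hu, hv, RR_add_w]

lemma RR'_comp (w : H) (x y : H ⊗[k] H) : RR' w (x * y) = RR' (RR' w y) x := by
  induction x using TensorProduct.induction_on with
  | zero => simp
  | tmul a b =>
    induction y using TensorProduct.induction_on with
    | zero => simp [RR'_zero_w]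
    | tmul c d => simp [Algebra.TensorProduct.tmul_mul_tmul, antipode_mul, mul_assoc]
    | add u v hu hv => simp [mul_add, add_mul, hu, hv, RR'_add_w]
  | add u v hu hv => simp [add_mul, hu, hv]

lemma RR_one_one : RR (1 : H) (1 : H ⊗[k] H) = 1 := by
  rw [Algebra.TensorProduct.one_def]
  simp [antipode_one]

lemma RR'_one_one : RR' (1 : H) (1 : H ⊗[k] H) = 1 := by
  rw [Algebra.TensorProduct.one_def]
  simp [antipode_one]

/-! ### the maps Θ, Θ' on triple tensors -/

def Theta : (H ⊗[k] H) ⊗[k] H →ₗ[k] H :=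
  LinearMap.mul' k H ∘ₗ TensorProduct.map
    (LinearMap.mul' k H ∘ₗ TensorProduct.map (HopfAlgebra.antipode (R := k)) LinearMap.id)
    (HopfAlgebra.antipode (R := k))

def Theta' : (H ⊗[k] H) ⊗[k] H →ₗ[k] H :=
  LinearMap.mul' k H ∘ₗ TensorProduct.map
    (LinearMap.mul' k H ∘ₗ TensorProduct.map LinearMap.id (HopfAlgebra.antipode (R := k)))
    LinearMap.id

@[simp] lemma Theta_tmul (a b c : H) :
    (Theta : (H ⊗[k] H) ⊗[k] H →ₗ[k] H) ((a ⊗ₜ[k] b) ⊗ₜ[k] c) = S° a * b * S° c := by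
  simp [Theta]

@[simp] lemma Theta'_tmul (a b c : H) :
    (Theta' : (H ⊗[k] H) ⊗[k] H →ₗ[k] H) ((a ⊗ₜ[k] b) ⊗ₜ[k] c) = a * S° b * c := by
  simp [Theta']

lemma Theta_key (a d : H) (u v : H ⊗[k] H) :
    Theta ((u ⊗ₜ[k] d) * (TensorProduct.assoc k H H H).symm (a ⊗ₜ[k] v))
      = S° a * RR 1 u * (RR' 1 v * S° d) := by
  induction u using TensorProduct.induction_on with
  | zero => rw [zero_tmul, zero_mul, map_zero]; simp
  | tmul u₁ u₂ =>
    induction v using TensorProduct.induction_on with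
    | zero => rw [tmul_zero, LinearEquiv.map_zero, mul_zero, map_zero]; simp
    | tmul v₁ v₂ =>
      rw [TensorProduct.assoc_symm_tmul]
      simp [Algebra.TensorProduct.tmul_mul_tmul, antipode_mul, mul_assoc]
    | add p q hp hq =>
      rw [tmul_add, LinearEquiv.map_add, mul_add, map_add, hp, hq, map_add, add_mul, mul_add]
  | add p q hp hq =>
    rw [add_tmul, add_mul, map_add, hp, hq, map_add, mul_add, add_mul]

lemma Theta'_key (a d : H) (u v : H ⊗[k] H) :
    Theta' ((TensorProduct.assoc k H H H).symm (a ⊗ₜ[k] u) * (v ⊗ₜ[k] d))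
      = a * RR' 1 v * (RR 1 u * d) := by
  induction u using TensorProduct.induction_on with
  | zero => rw [tmul_zero, LinearEquiv.map_zero, zero_mul, map_zero]; simp
  | tmul u₁ u₂ =>
    induction v using TensorProduct.induction_on with
    | zero => rw [zero_tmul, mul_zero, map_zero]; simp
    | tmul v₁ v₂ =>
      rw [TensorProduct.assoc_symm_tmul]
      simp [Algebra.TensorProduct.tmul_mul_tmul, antipode_mul, mul_assoc]
    | add p q hp hq =>
      rw [add_tmul, mul_add, map_add, hp, hq, map_add, mul_add, add_mul]
  | add p q hp hq =>
    rw [tmul_add, LinearEquiv.map_add, add_mul, map_add, hp, hq, map_add, add_mul, mul_add]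

lemma Theta_counit (x y : H ⊗[k] H) :
    Theta (D1 y * (TensorProduct.assoc k H H H).symm (D2 x))
      = S° (eps2 x) * S° (eps1 y) := by
  induction x using TensorProduct.induction_on with
  | zero => rw [map_zero, LinearEquiv.map_zero, mul_zero, map_zero, map_zero, map_zero, zero_mul]
  | tmul a b =>
    induction y using TensorProduct.induction_on with
    | zero => rw [map_zero, zero_mul, map_zero, map_zero, map_zero, mul_zero]
    | tmul c d =>
      show Theta ((Δ° c ⊗ₜ[k] d) * (TensorProduct.assoc k H H H).symm (a ⊗ₜ[k] Δ° b)) = _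
      rw [Theta_key, RR_one_comul, RR'_one_comul]
      simp only [eps1_tmul, eps2_tmul, map_smul, Algebra.algebraMap_eq_smul_one,
        mul_smul_comm, smul_mul_assoc, mul_one, one_mul, smul_smul]
      rw [mul_comm]
    | add u v hu hv =>
      rw [map_add, add_mul, map_add, hu, hv, map_add, map_add, mul_add]
  | add u v hu hv =>
    rw [map_add, LinearEquiv.map_add, mul_add, map_add, hu, hv, map_add, map_add, add_mul]

lemma Theta'_counit (x y : H ⊗[k] H) :
    Theta' ((TensorProduct.assoc k H H H).symm (D2 x) * D1 y)
      = eps2 x * eps1 y := by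
  induction x using TensorProduct.induction_on with
  | zero => rw [map_zero, LinearEquiv.map_zero, zero_mul, map_zero, map_zero, zero_mul]
  | tmul a b =>
    induction y using TensorProduct.induction_on with
    | zero => rw [map_zero, mul_zero, map_zero, map_zero, mul_zero]
    | tmul c d =>
      show Theta' ((TensorProduct.assoc k H H H).symm (a ⊗ₜ[k] Δ° b) * (Δ° c ⊗ₜ[k] d)) = _
      rw [Theta'_key, RR_one_comul, RR'_one_comul]
      simp only [eps1_tmul, eps2_tmul, Algebra.algebraMap_eq_smul_one,
        mul_smul_comm, smul_mul_assoc, mul_one, one_mul, smul_smul]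
      rw [mul_comm]
    | add u v hu hv =>
      rw [map_add, mul_add, map_add, hu, hv, map_add, mul_add]
  | add u v hu hv =>
    rw [map_add, LinearEquiv.map_add, add_mul, map_add, hu, hv, map_add, add_mul]

section Twist
variable (F G : H ⊗[k] H)

lemma tc_apply (h : H) : twistedComul F G h = F * Δ° h * G := by
  simp [twistedComul, mul_assoc]

lemma tc_one (h1 : F * G = 1) : twistedComul F G 1 = 1 := by
  rw [tc_apply, Bialgebra.comul_one, mul_one, h1]

lemma tc_mul (h2 : G * F = 1) (g h : H) :
    twistedComul F G (g * h) = twistedComul F G g * twistedComul F G h := by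
  simp only [tc_apply, Bialgebra.comul_mul]
  simp only [mul_assoc]
  rw [← mul_assoc G F, h2, one_mul]

lemma mapTC_eq (x : H ⊗[k] H) :
    TensorProduct.map (twistedComul F G) LinearMap.id x
      = (F ⊗ₜ[k] (1 : H)) * D1 x * (G ⊗ₜ[k] (1 : H)) := by
  induction x using TensorProduct.induction_on with
  | zero => rw [map_zero, map_zero, mul_zero, zero_mul]
  | tmul a b =>
    show twistedComul F G a ⊗ₜ[k] b = _
    rw [tc_apply]
    show _ = (F ⊗ₜ[k] (1 : H)) * (Δ° a ⊗ₜ[k] b) * (G ⊗ₜ[k] (1 : H))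
    rw [Algebra.TensorProduct.tmul_mul_tmul, Algebra.TensorProduct.tmul_mul_tmul,
      one_mul, mul_one]
  | add u v hu hv => rw [map_add, map_add, hu, hv, mul_add, add_mul]

lemma mapTC2_eq (x : H ⊗[k] H) :
    TensorProduct.map LinearMap.id (twistedComul F G) x
      = ((1 : H) ⊗ₜ[k] F) * D2 x * ((1 : H) ⊗ₜ[k] G) := by
  induction x using TensorProduct.induction_on with
  | zero => rw [map_zero, map_zero, mul_zero, zero_mul]
  | tmul a b =>
    show a ⊗ₜ[k] twistedComul F G b = _
    rw [tc_apply]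
    show _ = ((1 : H) ⊗ₜ[k] F) * (a ⊗ₜ[k] Δ° b) * ((1 : H) ⊗ₜ[k] G)
    rw [Algebra.TensorProduct.tmul_mul_tmul, Algebra.TensorProduct.tmul_mul_tmul,
      one_mul, mul_one]
  | add u v hu hv => rw [map_add, map_add, hu, hv, mul_add, add_mul]

-- counit legs of F and G
lemma eps1_F (he1 : TensorProduct.map Coalgebra.counit LinearMap.id F = 1) : eps1 F = 1 := by
  have : eps1 F = TensorProduct.lid k H (TensorProduct.map Coalgebra.counit LinearMap.id F) := rfl
  rw [this, he1, Algebra.TensorProduct.one_def]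
  simp

lemma eps2_F (he2 : TensorProduct.map LinearMap.id Coalgebra.counit F = 1) : eps2 F = 1 := by
  have : eps2 F = TensorProduct.rid k H (TensorProduct.map LinearMap.id Coalgebra.counit F) := rfl
  rw [this, he2, Algebra.TensorProduct.one_def]
  simp

lemma eps1_G (h1 : F * G = 1)
    (he1 : TensorProduct.map Coalgebra.counit LinearMap.id F = 1) : eps1 G = 1 := by
  have := eps1_mul F G
  rw [h1, eps1_one, eps1_F F he1, one_mul] at this
  exact this.symm

lemma eps2_G (h1 : F * G = 1)
    (he2 : TensorProduct.map LinearMap.id Coalgebra.counit F = 1) : eps2 G = 1 := by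
  have := eps2_mul F G
  rw [h1, eps2_one, eps2_F F he2, one_mul] at this
  exact this.symm

section Cocycle
variable (h1 : F * G = 1) (h2 : G * F = 1)
  (hc : (F ⊗ₜ[k] (1 : H)) * (TensorProduct.map Coalgebra.comul LinearMap.id F) =
    (TensorProduct.assoc k H H H).symm
      (((1 : H) ⊗ₜ[k] F) * (TensorProduct.map LinearMap.id Coalgebra.comul F)))

include h1 h2 hc

lemma hPhi : TensorProduct.assoc k H H H ((F ⊗ₜ[k] (1:H)) * D1 F)
    = ((1:H) ⊗ₜ[k] F) * D2 F := by
  rw [show (D1 F : (H ⊗[k] H) ⊗[k] H) = TensorProduct.map Coalgebra.comul LinearMap.id F from rfl,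
    hc, LinearEquiv.apply_symm_apply]
  rfl

omit h2 in
lemma hPhiPsi : ((F ⊗ₜ[k] (1:H)) * D1 F) * (D1 G * (G ⊗ₜ[k] (1:H))) = 1 := by
  rw [mul_assoc, ← mul_assoc (D1 F), ← D1_mul, h1, D1_one, one_mul,
    Algebra.TensorProduct.tmul_mul_tmul, h1, one_mul, ← Algebra.TensorProduct.one_def]

omit h1 hc in
lemma hPsiPhi : (D1 G * (G ⊗ₜ[k] (1:H))) * ((F ⊗ₜ[k] (1:H)) * D1 F) = 1 := by
  rw [mul_assoc, ← mul_assoc (G ⊗ₜ[k] (1:H)), Algebra.TensorProduct.tmul_mul_tmul, h2, one_mul,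
    ← Algebra.TensorProduct.one_def, one_mul, ← D1_mul, h2, D1_one]

omit h2 in
lemma hPhiPsi' : (((1:H) ⊗ₜ[k] F) * D2 F) * (D2 G * ((1:H) ⊗ₜ[k] G)) = 1 := by
  rw [mul_assoc, ← mul_assoc (D2 F), ← D2_mul, h1, D2_one, one_mul,
    Algebra.TensorProduct.tmul_mul_tmul, h1, one_mul, ← Algebra.TensorProduct.one_def]

omit h1 hc in
lemma hPsiPhi' : (D2 G * ((1:H) ⊗ₜ[k] G)) * (((1:H) ⊗ₜ[k] F) * D2 F) = 1 := by
  rw [mul_assoc, ← mul_assoc ((1:H) ⊗ₜ[k] G), Algebra.TensorProduct.tmul_mul_tmul, h2, one_mul,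
    ← Algebra.TensorProduct.one_def, one_mul, ← D2_mul, h2, D2_one]

lemma hPsi : TensorProduct.assoc k H H H (D1 G * (G ⊗ₜ[k] (1:H)))
    = D2 G * ((1:H) ⊗ₜ[k] G) := by
  have e1 : (((1:H) ⊗ₜ[k] F) * D2 F) * (TensorProduct.assoc k H H H (D1 G * (G ⊗ₜ[k] (1:H)))) = 1 := by
    rw [← hPhi F G h1 h2 hc, ← assocL_mul, hPhiPsi F G h1 hc, assocL_one]
  calc TensorProduct.assoc k H H H (D1 G * (G ⊗ₜ[k] (1:H)))
      = ((D2 G * ((1:H) ⊗ₜ[k] G)) * (((1:H) ⊗ₜ[k] F) * D2 F)) *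
          TensorProduct.assoc k H H H (D1 G * (G ⊗ₜ[k] (1:H))) := by
        rw [hPsiPhi' F G h2, one_mul]
    _ = (D2 G * ((1:H) ⊗ₜ[k] G)) * ((((1:H) ⊗ₜ[k] F) * D2 F) *
          TensorProduct.assoc k H H H (D1 G * (G ⊗ₜ[k] (1:H)))) := by rw [mul_assoc]
    _ = D2 G * ((1:H) ⊗ₜ[k] G) := by rw [e1, mul_one]

lemma main_coassoc (h : H) :
    TensorProduct.assoc k H H H
        (TensorProduct.map (twistedComul F G) LinearMap.id (twistedComul F G h)) =
      TensorProduct.map LinearMap.id (twistedComul F G) (twistedComul F G h) := by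
  have grouped : TensorProduct.map (twistedComul F G) LinearMap.id (twistedComul F G h)
      = ((F ⊗ₜ[k] (1:H)) * D1 F) * (D1 (Δ° h)) * (D1 G * (G ⊗ₜ[k] (1:H))) := by
    rw [mapTC_eq, tc_apply, D1_mul, D1_mul]
    simp only [mul_assoc]
  have grouped2 : TensorProduct.map LinearMap.id (twistedComul F G) (twistedComul F G h)
      = (((1:H) ⊗ₜ[k] F) * D2 F) * (D2 (Δ° h)) * (D2 G * ((1:H) ⊗ₜ[k] G)) := by
    rw [mapTC2_eq, tc_apply, D2_mul, D2_mul]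
    simp only [mul_assoc]
  rw [grouped, grouped2, assocL_mul, assocL_mul, hPhi F G h1 h2 hc, hPsi F G h1 h2 hc]
  congr 1
  congr 1
  exact Coalgebra.coassoc_apply h

end Cocycle

lemma main_counit_left (h1 : F * G = 1)
    (he1 : TensorProduct.map Coalgebra.counit LinearMap.id F = 1) (h : H) :
    TensorProduct.lid k H
      (TensorProduct.map Coalgebra.counit LinearMap.id (twistedComul F G h)) = h := by
  have : TensorProduct.lid k H
      (TensorProduct.map Coalgebra.counit LinearMap.id (twistedComul F G h))
      = eps1 (twistedComul F G h) := rfl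
  rw [this, tc_apply, eps1_mul, eps1_mul, eps1_F F he1, eps1_G F G h1 he1, eps1_comul,
    one_mul, mul_one]

lemma main_counit_right (h1 : F * G = 1)
    (he2 : TensorProduct.map LinearMap.id Coalgebra.counit F = 1) (h : H) :
    TensorProduct.rid k H
      (TensorProduct.map LinearMap.id Coalgebra.counit (twistedComul F G h)) = h := by
  have : TensorProduct.rid k H
      (TensorProduct.map LinearMap.id Coalgebra.counit (twistedComul F G h))
      = eps2 (twistedComul F G h) := rfl
  rw [this, tc_apply, eps2_mul, eps2_mul, eps2_F F he2, eps2_G F G h1 he2, eps2_comul,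
    one_mul, mul_one]

lemma RR'_one_eq : (RR' 1 : H ⊗[k] H →ₗ[k] H)
    = LinearMap.mul' k H ∘ₗ (HopfAlgebra.antipode (R := k)).lTensor H := by
  unfold RR'
  congr 1
  rw [LinearMap.mulLeft_one, LinearMap.id_comp]
  rfl

lemma twistU_eq : twistU F = RR' 1 F := by
  rw [RR'_one_eq]
  rfl

section Anti
variable (h1 : F * G = 1) (h2 : G * F = 1)
  (hc : (F ⊗ₜ[k] (1 : H)) * (TensorProduct.map Coalgebra.comul LinearMap.id F) =
    (TensorProduct.assoc k H H H).symm
      (((1 : H) ⊗ₜ[k] F) * (TensorProduct.map LinearMap.id Coalgebra.comul F)))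
  (he1 : TensorProduct.map Coalgebra.counit LinearMap.id F = 1)
  (he2 : TensorProduct.map LinearMap.id Coalgebra.counit F = 1)

include h1 h2 hc

omit he1 he2

-- step lemmas from the cocycle identity, in (H ⊗ H) ⊗ H
lemma st1 : (D1 F : (H ⊗[k] H) ⊗[k] H)
    = (G ⊗ₜ[k] (1:H)) * (TensorProduct.assoc k H H H).symm ((1:H) ⊗ₜ[k] F)
        * (TensorProduct.assoc k H H H).symm (D2 F) := by
  have hc' : (F ⊗ₜ[k] (1:H)) * D1 F
      = (TensorProduct.assoc k H H H).symm ((1:H) ⊗ₜ[k] F)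
          * (TensorProduct.assoc k H H H).symm (D2 F) := by
    rw [← assocL_symm_mul]; exact hc
  calc (D1 F : (H ⊗[k] H) ⊗[k] H)
      = ((G * F) ⊗ₜ[k] ((1:H) * 1)) * D1 F := by rw [h2, mul_one, ← Algebra.TensorProduct.one_def, one_mul]
    _ = (G ⊗ₜ[k] (1:H)) * ((F ⊗ₜ[k] (1:H)) * D1 F) := by
        rw [← mul_assoc, Algebra.TensorProduct.tmul_mul_tmul]
    _ = _ := by rw [hc', mul_assoc]

lemma st2 : (TensorProduct.assoc k H H H).symm (D2 F)
    = (TensorProduct.assoc k H H H).symm ((1:H) ⊗ₜ[k] G) * ((F ⊗ₜ[k] (1:H)) * D1 F) := by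
  have e : (TensorProduct.assoc k H H H).symm ((1:H) ⊗ₜ[k] G)
      * (TensorProduct.assoc k H H H).symm ((1:H) ⊗ₜ[k] F) = 1 := by
    rw [← assocL_symm_mul, Algebra.TensorProduct.tmul_mul_tmul, one_mul, h2,
      ← Algebra.TensorProduct.one_def, assocL_symm_one]
  have hc' : (F ⊗ₜ[k] (1:H)) * D1 F
      = (TensorProduct.assoc k H H H).symm ((1:H) ⊗ₜ[k] F)
          * (TensorProduct.assoc k H H H).symm (D2 F) := by
    rw [← assocL_symm_mul]; exact hc
  rw [hc', ← mul_assoc, e, one_mul]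

lemma key1 : (D1 F : (H ⊗[k] H) ⊗[k] H) * (TensorProduct.assoc k H H H).symm (D2 G)
    = (G ⊗ₜ[k] (1:H)) * (TensorProduct.assoc k H H H).symm ((1:H) ⊗ₜ[k] F) := by
  rw [st1 F G h1 h2 hc, mul_assoc, ← assocL_symm_mul, ← D2_mul, h1, D2_one,
    assocL_symm_one, mul_one]

lemma key2 : (TensorProduct.assoc k H H H).symm (D2 F) * (D1 G : (H ⊗[k] H) ⊗[k] H)
    = (TensorProduct.assoc k H H H).symm ((1:H) ⊗ₜ[k] G) * (F ⊗ₜ[k] (1:H)) := by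
  rw [st2 F G h1 h2 hc, mul_assoc, mul_assoc, ← D1_mul, h1, D1_one, mul_one]

include he1 he2

lemma mainUW : twistU F * RR 1 G = 1 := by
  have e1 : Theta' ((TensorProduct.assoc k H H H).symm ((1:H) ⊗ₜ[k] G) * (F ⊗ₜ[k] (1:H)))
      = RR' 1 F * RR 1 G := by
    rw [Theta'_key, one_mul, mul_one]
  rw [twistU_eq, ← e1, ← key2 F G h1 h2 hc, Theta'_counit, eps2_F F he2, eps1_G F G h1 he1,
    one_mul]

lemma mainWU : RR 1 G * twistU F = 1 := by
  have e1 : Theta ((G ⊗ₜ[k] (1:H)) * (TensorProduct.assoc k H H H).symm ((1:H) ⊗ₜ[k] F))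
      = RR 1 G * RR' 1 F := by
    rw [Theta_key, antipode_one, one_mul, mul_one]
  rw [twistU_eq, ← e1, ← key1 F G h1 h2 hc, Theta_counit, eps2_G F G h1 he2, eps1_F F he1,
    antipode_one, one_mul]

end Anti

lemma expand_left (U W : H) (x : H ⊗[k] H) :
    LinearMap.mul' k H (TensorProduct.map
      (LinearMap.mulLeft k U ∘ₗ LinearMap.mulRight k W ∘ₗ HopfAlgebra.antipode (R := k))
      LinearMap.id x) = U * RR W x := by
  induction x using TensorProduct.induction_on with
  | zero => rw [map_zero, map_zero, map_zero, mul_zero]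
  | tmul a b => simp [mul_assoc]
  | add u v hu hv => rw [map_add, map_add, hu, hv, map_add, mul_add]

lemma expand_right (U W : H) (x : H ⊗[k] H) :
    LinearMap.mul' k H (TensorProduct.map LinearMap.id
      (LinearMap.mulLeft k U ∘ₗ LinearMap.mulRight k W ∘ₗ HopfAlgebra.antipode (R := k))
      x) = RR' U x * W := by
  induction x using TensorProduct.induction_on with
  | zero => rw [map_zero, map_zero, map_zero, zero_mul]
  | tmul a b => simp [mul_assoc]
  | add u v hu hv => rw [map_add, map_add, hu, hv, map_add, add_mul]

lemma main_antipode_left (h1 : F * G = 1) (h2 : G * F = 1)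
    (hUW : twistU F * RR 1 G = 1) (h : H) :
    LinearMap.mul' k H (TensorProduct.map (twistedAntipode F (RR 1 G)) LinearMap.id
      (twistedComul F G h)) = algebraMap k H (Coalgebra.counit h) := by
  have e0 : twistedAntipode F (RR 1 G) = LinearMap.mulLeft k (twistU F) ∘ₗ
      LinearMap.mulRight k (RR 1 G) ∘ₗ HopfAlgebra.antipode (R := k) := rfl
  have hWF : RR (RR 1 G) F = 1 := by rw [← RR_comp, h2, RR_one_one]
  rw [e0, expand_left, tc_apply, RR_comp, RR_comp, hWF, RR_one_comul,
    Algebra.algebraMap_eq_smul_one, RR_smul_w, mul_smul_comm, hUW,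
    ← Algebra.algebraMap_eq_smul_one]

lemma main_antipode_right (h1 : F * G = 1) (h2 : G * F = 1)
    (hUW : twistU F * RR 1 G = 1) (h : H) :
    LinearMap.mul' k H (TensorProduct.map LinearMap.id (twistedAntipode F (RR 1 G))
      (twistedComul F G h)) = algebraMap k H (Coalgebra.counit h) := by
  have e0 : twistedAntipode F (RR 1 G) = LinearMap.mulLeft k (twistU F) ∘ₗ
      LinearMap.mulRight k (RR 1 G) ∘ₗ HopfAlgebra.antipode (R := k) := rfl
  have hUG : RR' (twistU F) G = 1 := by rw [twistU_eq, ← RR'_comp, h2, RR'_one_one]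
  rw [e0, expand_right, tc_apply, RR'_comp, hUG, RR'_comp, RR'_one_comul,
    Algebra.algebraMap_eq_smul_one, RR'_smul_w, ← twistU_eq, smul_mul_assoc, hUW,
    ← Algebra.algebraMap_eq_smul_one]

end Twist
end DrinfeldTwist
end DrinfeldTwistAux

/-- Drinfeld twist of a Hopf algebra: if `F` is a counital 2-cocycle on `H`, then `H`
with the same algebra structure and counit, twisted coproduct `Δ_F(h) = F·Δ(h)·F⁻¹` and
twisted antipode `S_F(h) = U·S(h)·U⁻¹` (`U = F₁·S(F₂)`) is again a Hopf algebra: `Δ_F`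
is a coassociative algebra map with counit `ε`, and `S_F` satisfies the antipode axioms. -/
theorem twisted_hopfAlgebra (F Finv : H ⊗[k] H) (hF : IsCocycle k H F Finv) :
    (∀ h : H,
      TensorProduct.assoc k H H H
        (TensorProduct.map (twistedComul F Finv) LinearMap.id (twistedComul F Finv h)) =
      TensorProduct.map LinearMap.id (twistedComul F Finv) (twistedComul F Finv h)) ∧
    (∀ h : H,
      TensorProduct.lid k H
        (TensorProduct.map Coalgebra.counit LinearMap.id (twistedComul F Finv h)) = h) ∧
    (∀ h : H,
      TensorProduct.rid k H
        (TensorProduct.map LinearMap.id Coalgebra.counit (twistedComul F Finv h)) = h) ∧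
    (twistedComul F Finv (1 : H) = 1) ∧
    (∀ g h : H, twistedComul F Finv (g * h) = twistedComul F Finv g * twistedComul F Finv h) ∧
    (∃ Uinv : H, twistU F * Uinv = 1 ∧ Uinv * twistU F = 1 ∧
      (∀ h : H,
        LinearMap.mul' k H
          (TensorProduct.map (twistedAntipode F Uinv) LinearMap.id (twistedComul F Finv h)) =
        algebraMap k H (Coalgebra.counit h)) ∧
      (∀ h : H,
        LinearMap.mul' k H
          (TensorProduct.map LinearMap.id (twistedAntipode F Uinv) (twistedComul F Finv h)) =
        algebraMap k H (Coalgebra.counit h))) := by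
  obtain ⟨h1, h2, hc, he1, he2⟩ := hF
  exact ⟨DrinfeldTwist.main_coassoc F Finv h1 h2 hc,
    DrinfeldTwist.main_counit_left F Finv h1 he1,
    DrinfeldTwist.main_counit_right F Finv h1 he2,
    DrinfeldTwist.tc_one F Finv h1,
    DrinfeldTwist.tc_mul F Finv h2,
    DrinfeldTwist.RR 1 Finv,
    DrinfeldTwist.mainUW F Finv h1 h2 hc he1 he2,
    DrinfeldTwist.mainWU F Finv h1 h2 hc he1 he2,
    DrinfeldTwist.main_antipode_left F Finv h1 h2
      (DrinfeldTwist.mainUW F Finv h1 h2 hc he1 he2),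
    DrinfeldTwist.main_antipode_right F Finv h1 h2
      (DrinfeldTwist.mainUW F Finv h1 h2 hc he1 he2)⟩

end
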